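/- Let D ∈ ℝ^{n×n} be symmetric, let E ∈ ℝ^{n×n}, and set C = D·E and G = C + Cᵀ − EᵀDE. Suppose G is positive semidefinite. For any w, wᵏ, w̃ ∈ ℝⁿ, setting w⁺ = wᵏ − E(wᵏ − w̃), one has (w − w̃)ᵀ D E (wᵏ − w̃) ≥ (1/2)·( (w − w⁺)ᵀD(w − w⁺) − (w − wᵏ)ᵀD(w − wᵏ) ). -/

import Mathlib

open Matrix

/-- Corollary of the per-iteration identity in the VI analysis of neADMM: for symmetric
`D`, `C = D·E`, `G = C + Cᵀ − EᵀDE` positive semidefinite, and the corrector step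
`w⁺ = wᵏ − E(wᵏ − w̃)`,
`(w − w̃)ᵀDE(wᵏ − w̃) ≥ ½(‖w − w⁺‖_D² − ‖w − wᵏ‖_D²)`. -/
theorem neADMM_VI_inequality {n : ℕ} (D E : Matrix (Fin n) (Fin n) ℝ) (hD : D.IsSymm)
    (C G : Matrix (Fin n) (Fin n) ℝ) (hC : C = D * E) (hG : G = C + Cᵀ - Eᵀ * D * E)
    (hGpsd : G.PosSemidef)
    (w wk wt : Fin n → ℝ) (wp : Fin n → ℝ) (hwp : wp = wk - E *ᵥ (wk - wt)) :
    (1 / 2) * ((w - wp) ⬝ᵥ (D *ᵥ (w - wp)) - (w - wk) ⬝ᵥ (D *ᵥ (w - wk))) ≤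
      (w - wt) ⬝ᵥ ((D * E) *ᵥ (wk - wt)) := by
  set u := wk - wt with hu
  have h0 : 0 ≤ u ⬝ᵥ (G *ᵥ u) := by
    have := hGpsd.dotProduct_mulVec_nonneg u
    simpa using this
  have hsym : ∀ x y : Fin n → ℝ, x ⬝ᵥ (D *ᵥ y) = y ⬝ᵥ (D *ᵥ x) := by
    intro x y
    rw [Matrix.dotProduct_mulVec, ← Matrix.mulVec_transpose, hD.eq, dotProduct_comm]
  have key : u ⬝ᵥ (G *ᵥ u) =
      2 * ((w - wt) ⬝ᵥ ((D * E) *ᵥ u))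
        - ((w - wp) ⬝ᵥ (D *ᵥ (w - wp)) - (w - wk) ⬝ᵥ (D *ᵥ (w - wk))) := by
    subst hC hG hwp
    have hwwt : w - wt = (w - wk) + u := by rw [hu]; abel
    have hwwp : w - (wk - E *ᵥ u) = (w - wk) + E *ᵥ u := by abel
    rw [hwwt, hwwp]
    simp only [Matrix.sub_mulVec, Matrix.add_mulVec, Matrix.mulVec_add, Matrix.mulVec_sub,
      dotProduct_add, dotProduct_sub, add_dotProduct, sub_dotProduct,
      Matrix.mulVec_mulVec, Matrix.transpose_mul, Matrix.transpose_transpose, hD.eq]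
    have hEt : ∀ x y, x ⬝ᵥ (Eᵀ *ᵥ y) = (E *ᵥ x) ⬝ᵥ y := fun x y => by
      rw [Matrix.dotProduct_mulVec, Matrix.vecMul_transpose]
    simp only [← Matrix.mulVec_mulVec]
    rw [hEt, hEt, hsym (E *ᵥ u) u, hsym (E *ᵥ u) w, hsym (E *ᵥ u) wk]
    ring
  linarith
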